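/- arXiv:1806.09137 — 2 statements merged into one kernel-verified Lean document; each statement's English description precedes it below -/
import Mathlib

section
/- Let n and m be finite index types, let Φ : Matrix n n ℂ → Matrix m m ℂ be a ℂ-linear map that sends positive semidefinite matrices to positive semidefinite matrices, and let σ, τ, ρ be density matrices on the n-indexed space such that ρ = F·σ + (1−F)·τ for some real F with 0 ≤ F ≤ 1. If Φ(σ) is positive semidefinite and satisfies Tr(Φ(σ)·Φ(σ)) = 1 (i.e., Φ(σ) is a pure state), then Re Tr(Φ(σ)·Φ(ρ)) ≥ F. -/
open Matrix ComplexOrder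

lemma psd_trace_nonneg' {m : Type*} [Fintype m] [DecidableEq m] {M : Matrix m m ℂ}
    (hM : M.PosSemidef) : 0 ≤ M.trace := by
  rw [Matrix.trace]
  apply Finset.sum_nonneg
  intro i _
  exact hM.diag_nonneg

open scoped MatrixOrder in
lemma trace_mul_psd_nonneg' {m : Type*} [Fintype m] [DecidableEq m] {A B : Matrix m m ℂ}
    (hA : A.PosSemidef) (hB : B.PosSemidef) : 0 ≤ (A * B).trace := by
  have h2 : (A * B).trace = (CFC.sqrt A * B * CFC.sqrt A).trace := by
    rw [show A * B = CFC.sqrt A * (CFC.sqrt A * B) by rw [← mul_assoc, CFC.sqrt_mul_sqrt_self A hA.nonneg],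
      ← Matrix.trace_mul_comm, mul_assoc]
  rw [h2]
  have : (CFC.sqrt A * B * (CFC.sqrt A)ᴴ).PosSemidef := hB.mul_mul_conjTranspose_same (CFC.sqrt A)
  rw [(CFC.sqrt_nonneg A).posSemidef.1.eq] at this
  exact psd_trace_nonneg' this

/-- Lemma 1 core: For a positive ℂ-linear map Φ and density matrices
σ, τ, ρ with ρ = F·σ + (1−F)·τ, 0 ≤ F ≤ 1, if Φ(σ) is PSD with Tr(Φ(σ)·Φ(σ)) = 1
(a pure state), then Re Tr(Φ(σ)·Φ(ρ)) ≥ F. -/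
theorem output_fidelity_lower_bound
    {n m : Type*} [Fintype n] [DecidableEq n] [Fintype m] [DecidableEq m]
    (Φ : Matrix n n ℂ →ₗ[ℂ] Matrix m m ℂ)
    (hΦpos : ∀ A : Matrix n n ℂ, A.PosSemidef → (Φ A).PosSemidef)
    (σ τ ρ : Matrix n n ℂ)
    (hσ : σ.PosSemidef) (hσtr : σ.trace = 1)
    (hτ : τ.PosSemidef) (hτtr : τ.trace = 1)
    (hρ : ρ.PosSemidef) (hρtr : ρ.trace = 1)
    (F : ℝ) (hF0 : 0 ≤ F) (hF1 : F ≤ 1)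
    (hdecomp : ρ = (F : ℂ) • σ + ((1 - F : ℝ) : ℂ) • τ)
    (hΦσpsd : (Φ σ).PosSemidef) (hΦσpure : ((Φ σ) * (Φ σ)).trace = 1) :
    F ≤ ((Φ σ * Φ ρ).trace).re := by
  have key : (Φ σ * Φ ρ).trace
      = (F : ℂ) * ((Φ σ * Φ σ).trace) + ((1 - F : ℝ) : ℂ) * ((Φ σ * Φ τ).trace) := by
    rw [hdecomp, map_add, _root_.map_smul, _root_.map_smul, mul_add, mul_smul_comm, mul_smul_comm,
      trace_add, trace_smul, trace_smul]
    simp [smul_eq_mul]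
  have hτ' : 0 ≤ (Φ σ * Φ τ).trace := trace_mul_psd_nonneg' hΦσpsd (hΦpos τ hτ)
  rw [key, hΦσpure]
  have h1 : 0 ≤ ((Φ σ * Φ τ).trace).re := by
    have := hτ'
    rw [Complex.le_def] at this
    simpa using this.1
  simp only [Complex.add_re, Complex.mul_re, Complex.ofReal_re, Complex.ofReal_im,
    Complex.one_re, Complex.one_im]
  nlinarith [h1, sub_nonneg.mpr hF1]
end

section
/- Let n and m be finite index types, let Φ : Matrix n n ℂ → Matrix m m ℂ be a ℂ-linear map sending positive semidefinite matrices to positive semidefinite matrices, let σ, τ, ρ be density matrices on the n-indexed space with ρ = F·σ + (1−F)·τ for a real F, and let β, F_T ∈ [0,1] be reals with (1−β)·F_T ≤ F ≤ 1. Assume Φ(σ) is positive semidefinite with Tr(Φ(σ)·Φ(σ)) = 1 (a pure state) and that Re Tr(Φ(ρ)) ≤ 1. Then the probability of an incorrect outcome obeys Re Tr((I − Φ(σ))·Φ(ρ)) ≤ 1 − (1−β)·F_T. -/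
open Matrix ComplexOrder

lemma psd_trace_re_nonneg {m : Type*} [Fintype m] [DecidableEq m]
    (A : Matrix m m ℂ) (hA : A.PosSemidef) : 0 ≤ (A.trace).re := by
  have h : ∀ i, 0 ≤ (A i i).re := by
    intro i
    have h2 : (0 : ℂ) ≤ A i i := hA.diag_nonneg
    exact (Complex.le_def.mp h2).1
  simp only [Matrix.trace, Matrix.diag, Complex.re_sum]
  exact Finset.sum_nonneg fun i _ => h i

open scoped MatrixOrder in
lemma psd_mul_trace_re_nonneg {m : Type*} [Fintype m] [DecidableEq m]
    (A B : Matrix m m ℂ) (hA : A.PosSemidef) (hB : B.PosSemidef) :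
    0 ≤ ((A * B).trace).re := by
  have hsq : (CFC.sqrt B) * (CFC.sqrt B) = B := CFC.sqrt_mul_sqrt_self B hB.nonneg
  have hψ : ((CFC.sqrt B))ᴴ = (CFC.sqrt B) := (CFC.sqrt_nonneg B).posSemidef.1
  have hkey : (A * B).trace = ((CFC.sqrt B) * A * (CFC.sqrt B)).trace := by
    conv_lhs => rw [← hsq]
    rw [← Matrix.mul_assoc, Matrix.trace_mul_cycle]
  have h := psd_trace_re_nonneg _ (hA.conjTranspose_mul_mul_same (CFC.sqrt B))
  rw [hψ] at h
  rw [hkey]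
  exact h

/-- ε-verifiability, Lemma 1 + Theorem 2: For a positive ℂ-linear map Φ,
density matrices σ, τ, ρ with ρ = F·σ + (1−F)·τ, reals β, F_T ∈ [0,1] with
(1−β)·F_T ≤ F ≤ 1, if Φ(σ) is PSD with Tr(Φ(σ)·Φ(σ)) = 1 (a pure state) and
Re Tr(Φ(ρ)) ≤ 1, then the probability of an incorrect outcome obeys
Re Tr((I − Φ(σ))·Φ(ρ)) ≤ 1 − (1−β)·F_T. -/
theorem verifiability_incorrect_outcome_bound
    {n m : Type*} [Fintype n] [DecidableEq n] [Fintype m] [DecidableEq m]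
    (Φ : Matrix n n ℂ →ₗ[ℂ] Matrix m m ℂ)
    (hΦpos : ∀ A : Matrix n n ℂ, A.PosSemidef → (Φ A).PosSemidef)
    (σ τ ρ : Matrix n n ℂ)
    (hσ : σ.PosSemidef) (hσtr : σ.trace = 1)
    (hτ : τ.PosSemidef) (hτtr : τ.trace = 1)
    (hρ : ρ.PosSemidef) (hρtr : ρ.trace = 1)
    (F β F_T : ℝ)
    (hβ0 : 0 ≤ β) (hβ1 : β ≤ 1) (hFT0 : 0 ≤ F_T) (hFT1 : F_T ≤ 1)
    (hFlow : (1 - β) * F_T ≤ F) (hF1 : F ≤ 1)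
    (hdecomp : ρ = (F : ℂ) • σ + ((1 - F : ℝ) : ℂ) • τ)
    (hΦσpsd : (Φ σ).PosSemidef) (hΦσpure : ((Φ σ) * (Φ σ)).trace = 1)
    (hΦρtr : ((Φ ρ).trace).re ≤ 1) :
    (((1 - Φ σ) * Φ ρ).trace).re ≤ 1 - (1 - β) * F_T := by
  have hΦτ : (Φ τ).PosSemidef := hΦpos τ hτ
  have hΦρeq : Φ ρ = (F : ℂ) • Φ σ + ((1 - F : ℝ) : ℂ) • Φ τ := by
    rw [hdecomp, map_add, Φ.map_smul, Φ.map_smul]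
  have hcross : 0 ≤ (((Φ σ) * (Φ τ)).trace).re :=
    psd_mul_trace_re_nonneg _ _ hΦσpsd hΦτ
  have hexp : ((Φ σ * Φ ρ).trace).re
      = F * ((Φ σ * Φ σ).trace).re + (1 - F) * ((Φ σ * Φ τ).trace).re := by
    rw [hΦρeq]
    simp [Matrix.mul_add, Matrix.mul_smul, Matrix.trace_add, Matrix.trace_smul,
      Complex.add_re, Complex.mul_re]
  have hlow : F ≤ ((Φ σ * Φ ρ).trace).re := by
    rw [hexp, hΦσpure]
    have : 0 ≤ (1 - F) * ((Φ σ * Φ τ).trace).re :=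
      mul_nonneg (by linarith) hcross
    simp only [Complex.one_re]
    linarith
  have hsplit : ((1 - Φ σ) * Φ ρ).trace = (Φ ρ).trace - (Φ σ * Φ ρ).trace := by
    rw [Matrix.sub_mul, Matrix.one_mul, Matrix.trace_sub]
  rw [hsplit, Complex.sub_re]
  linarith
end
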